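/- For the wavefunction |Ψ⟩ = Σ_{x_1,x_2} α_{x_1} U_{x_1 x_2} |x̃_2⟩|x_1⟩|x_2⟩ on Q ⊗ A_1 ⊗ A_2 (with α a unit-norm amplitude vector and U unitary), the reduced density matrix ρ(A_1 A_2) obtained by tracing out Q satisfies S(A_1 A_2) = S(A_2) = H[q^{(2)}], where q^{(2)}_{x_2} = Σ_{x_1} |α_{x_1}|^2 |U_{x_1 x_2}|^2. -/

import Mathlib

open Matrix BigOperators

/-- Von Neumann entropy of a Hermitian matrix, via its eigenvalues (natural log). -/
noncomputable def vnEntropy {n : Type*} [Fintype n] [DecidableEq n]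
    {ρ : Matrix n n ℂ} (h : ρ.IsHermitian) : ℝ :=
  -∑ i, h.eigenvalues i * Real.log (h.eigenvalues i)

/-- Shannon entropy of a probability vector (natural log). -/
noncomputable def shannonH {n : Type*} [Fintype n] (q : n → ℝ) : ℝ :=
  -∑ i, q i * Real.log (q i)

section Aux

open Polynomial

lemma charmatrix_eq' {n R : Type*} [Fintype n] [DecidableEq n] [CommRing R]
    (M : Matrix n n R) :
    charmatrix M = (X : R[X]) • (1 : Matrix n n R[X]) - M.map C := by
  ext i j
  by_cases h : i = j <;>
    simp [charmatrix, h, Matrix.one_apply, Matrix.smul_apply, Matrix.scalar_apply,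
      Matrix.diagonal_apply, Matrix.map_apply]

lemma charpoly_eq_det' {n R : Type*} [Fintype n] [DecidableEq n] [CommRing R]
    (M : Matrix n n R) :
    M.charpoly = ((X : R[X]) • (1 : Matrix n n R[X]) - M.map C).det := by
  rw [Matrix.charpoly, charmatrix_eq']

lemma charpoly_diagonal' {n R : Type*} [Fintype n] [DecidableEq n] [CommRing R]
    (v : n → R) :
    (Matrix.diagonal v).charpoly = ∏ i, (X - C (v i)) := by
  rw [Matrix.charpoly]
  have : charmatrix (Matrix.diagonal v) = Matrix.diagonal (fun i => X - C (v i)) := by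
    ext i j
    by_cases h : i = j <;> simp [h, Matrix.diagonal_apply]
  rw [this, Matrix.det_diagonal]

lemma det_smul_one_sub_mul' {R : Type*} [Field R] {n m : Type*} [Fintype n] [Fintype m]
    [DecidableEq n] [DecidableEq m]
    (A : Matrix n m R[X]) (B : Matrix m n R[X]) :
    X ^ Fintype.card m * ((X : R[X]) • (1 : Matrix n n R[X]) - A * B).det
      = X ^ Fintype.card n * ((X : R[X]) • (1 : Matrix m m R[X]) - B * A).det := by
  have H := Matrix.det_mul_comm
      (fromBlocks ((X : R[X]) • (1 : Matrix n n R[X])) A B (1 : Matrix m m R[X]))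
      (fromBlocks (1 : Matrix n n R[X]) 0 (-B) ((X : R[X]) • (1 : Matrix m m R[X])))
  rw [fromBlocks_multiply, fromBlocks_multiply] at H
  have e1 : (X : R[X]) • (1 : Matrix n n R[X]) * (1 : Matrix n n R[X]) + A * -B
      = (X : R[X]) • (1 : Matrix n n R[X]) - A * B := by
    rw [Matrix.mul_one, Matrix.mul_neg, sub_eq_add_neg]
  have e2 : B * (1 : Matrix n n R[X]) + (1 : Matrix m m R[X]) * -B
      = (0 : Matrix m n R[X]) := by
    rw [Matrix.mul_one, Matrix.one_mul, add_neg_cancel]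
  have e3 : B * (0 : Matrix n m R[X]) + (1 : Matrix m m R[X]) * ((X : R[X]) • (1 : Matrix m m R[X]))
      = (X : R[X]) • (1 : Matrix m m R[X]) := by
    rw [Matrix.mul_zero, Matrix.one_mul, zero_add]
  have e4 : (1 : Matrix n n R[X]) * ((X : R[X]) • (1 : Matrix n n R[X])) + (0 : Matrix n m R[X]) * B
      = (X : R[X]) • (1 : Matrix n n R[X]) := by
    rw [Matrix.one_mul, Matrix.zero_mul, add_zero]
  have e5 : -B * ((X : R[X]) • (1 : Matrix n n R[X])) + (X : R[X]) • (1 : Matrix m m R[X]) * B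
      = (0 : Matrix m n R[X]) := by
    rw [Matrix.mul_smul, Matrix.smul_mul, Matrix.mul_one, Matrix.one_mul, smul_neg,
      neg_add_cancel]
  have e6 : -B * A + (X : R[X]) • (1 : Matrix m m R[X]) * (1 : Matrix m m R[X])
      = (X : R[X]) • (1 : Matrix m m R[X]) - B * A := by
    rw [Matrix.mul_one, Matrix.neg_mul, neg_add_eq_sub]
  rw [e1, e2, e3, e4, e5, e6, Matrix.det_fromBlocks_zero₂₁, Matrix.det_fromBlocks_zero₂₁] at H
  have dXm : ((X : R[X]) • (1 : Matrix m m R[X])).det = X ^ Fintype.card m := by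
    rw [Matrix.det_smul, Matrix.det_one, mul_one]
  have dXn : ((X : R[X]) • (1 : Matrix n n R[X])).det = X ^ Fintype.card n := by
    rw [Matrix.det_smul, Matrix.det_one, mul_one]
  rw [dXm, dXn] at H
  rw [mul_comm] at H
  exact H

lemma hermitian_charpoly' {n : Type*} [Fintype n] [DecidableEq n] {A : Matrix n n ℂ}
    (hA : A.IsHermitian) :
    A.charpoly = ∏ i, (X - C ((hA.eigenvalues i : ℝ) : ℂ)) := by
  set V : Matrix n n ℂ := (Matrix.IsHermitian.eigenvectorUnitary hA : Matrix n n ℂ) with hV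
  set D : Matrix n n ℂ := Matrix.diagonal (RCLike.ofReal ∘ hA.eigenvalues) with hD
  have hVW : V * star V = 1 :=
    Matrix.mem_unitaryGroup_iff.mp (Matrix.IsHermitian.eigenvectorUnitary hA).2
  have hA' : A = V * D * star V := hA.spectral_theorem
  have hmap1 : (V.map C) * ((star V).map C) = (1 : Matrix n n ℂ[X]) := by
    rw [← Matrix.map_mul, hVW]
    exact Matrix.map_one _ (map_zero C) (map_one C)
  have key : charmatrix A = V.map C * charmatrix D * (star V).map C := by
    rw [charmatrix, charmatrix, RingHom.mapMatrix_apply, RingHom.mapMatrix_apply]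
    conv_lhs => rw [hA']
    rw [Matrix.map_mul, Matrix.map_mul, Matrix.mul_sub, Matrix.sub_mul]
    congr 1
    have hcomm : V.map C * Matrix.scalar n (X : ℂ[X]) = Matrix.scalar n (X : ℂ[X]) * V.map C :=
      (Matrix.scalar_commute (X : ℂ[X]) (fun r => Commute.all _ r) (V.map C)).symm
    rw [hcomm, Matrix.mul_assoc, hmap1, Matrix.mul_one]
  have hdet : A.charpoly = D.charpoly := by
    rw [Matrix.charpoly, Matrix.charpoly, key, Matrix.det_mul, Matrix.det_mul]
    have : (V.map C).det * ((star V).map C).det = 1 := by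
      rw [← Matrix.det_mul, hmap1, Matrix.det_one]
    calc (V.map C).det * (charmatrix D).det * ((star V).map C).det
        = (V.map C).det * ((star V).map C).det * (charmatrix D).det := by ring
      _ = (charmatrix D).det := by rw [this, one_mul]
  rw [hdet, hD, charpoly_diagonal']
  rfl

lemma prodXsubC_inj' {s t : Multiset ℂ}
    (h : (s.map (fun a => X - C a)).prod = (t.map (fun a => X - C a)).prod) : s = t := by
  rw [← Polynomial.roots_multiset_prod_X_sub_C s, h, Polynomial.roots_multiset_prod_X_sub_C]

lemma replicate_zero_prod' (k : ℕ) :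
    ((Multiset.replicate k (0 : ℂ)).map (fun a => X - C a)).prod = X ^ k := by
  rw [Multiset.map_replicate, Multiset.prod_replicate, map_zero, sub_zero]

end Aux

/-- For |Ψ⟩ = Σ_{x₁,x₂} α_{x₁} U_{x₁x₂} |x̃₂⟩|x₁⟩|x₂⟩ on Q ⊗ A₁ ⊗ A₂, the reduced
state ρ(A₁A₂) (tracing out Q) satisfies S(A₁A₂) = S(A₂) = H[q⁽²⁾] with
q⁽²⁾_{x₂} = Σ_{x₁} |α_{x₁}|²|U_{x₁x₂}|². -/
theorem two_ancilla_entropy_at_end {d : ℕ} (α : Fin d → ℂ)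
    (hα : ∑ x, ‖α x‖ ^ 2 = 1)
    (U : Matrix (Fin d) (Fin d) ℂ) (hU : U ∈ Matrix.unitaryGroup (Fin d) ℂ)
    (Ψ : Fin d × Fin d × Fin d → ℂ)
    (hΨ : Ψ = fun v => (if v.1 = v.2.2 then 1 else 0) * α v.2.1 * U v.2.1 v.2.2)
    (ρ12 : Matrix (Fin d × Fin d) (Fin d × Fin d) ℂ)
    (hρ12 : ρ12 = Matrix.of fun p p' =>
      ∑ xt, Ψ (xt, p.1, p.2) * star (Ψ (xt, p'.1, p'.2)))
    (ρ2 : Matrix (Fin d) (Fin d) ℂ)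
    (hρ2 : ρ2 = Matrix.of fun y y' => ∑ x1, ρ12 (x1, y) (x1, y'))
    (h12 : ρ12.IsHermitian) (h2 : ρ2.IsHermitian) :
    vnEntropy h12 = vnEntropy h2 ∧
    vnEntropy h2 =
      shannonH (fun x2 => ∑ x1, ‖α x1‖ ^ 2 * ‖U x1 x2‖ ^ 2) := by
  classical
  set q : Fin d → ℝ := fun x2 => ∑ x1, ‖α x1‖ ^ 2 * ‖U x1 x2‖ ^ 2 with hq
  set B : Matrix (Fin d × Fin d) (Fin d) ℂ :=
    Matrix.of (fun p y => if p.2 = y then α p.1 * U p.1 y else 0) with hB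
  -- ρ12 = B * Bᴴ
  have hρ12B : ρ12 = B * Bᴴ := by
    rw [hρ12, hΨ, hB]
    ext p p'
    simp only [Matrix.of_apply, Matrix.mul_apply, Matrix.conjTranspose_apply, star_mul',
      apply_ite, star_one, star_zero, ite_mul, mul_ite, one_mul, zero_mul, mul_zero,
      mul_one]
    by_cases h : p.2 = p'.2
    · simp only [h, Finset.sum_ite_eq, Finset.sum_ite_eq', Finset.mem_univ, if_true]
      try ring
    · simp [h, Finset.sum_ite_eq, Finset.sum_ite_eq']
      intro h'
      exact absurd h'.symm h
  -- ρ2 = Bᴴ * B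
  have hρ2' : ρ2 = Matrix.of fun y y' => ∑ x1, (B * Bᴴ) (x1, y) (x1, y') := by
    rw [hρ2, hρ12B]
  have hρ2B : ρ2 = Bᴴ * B := by
    rw [hρ2', hB]
    ext y y'
    simp only [Matrix.of_apply, Matrix.mul_apply, Matrix.conjTranspose_apply, star_zero,
      star_mul', Fintype.sum_prod_type, ite_mul, mul_ite, zero_mul, mul_zero]
    by_cases h : y = y'
    · subst h
      simp [Finset.sum_ite_eq, Finset.sum_ite_eq']
      try exact Finset.sum_congr rfl fun x _ => by ring
    · simp [h, show y' ≠ y from fun hh => h hh.symm, Finset.sum_ite_eq, Finset.sum_ite_eq']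
  -- ρ2 is diagonal with entries q
  have hdiagB : Bᴴ * B = Matrix.diagonal (fun y => (q y : ℂ)) := by
    rw [hB]
    ext y y'
    simp only [Matrix.of_apply, Matrix.mul_apply, Matrix.conjTranspose_apply,
      Fintype.sum_prod_type, Matrix.diagonal_apply]
    by_cases h : y = y'
    · subst h
      simp [hq, Finset.sum_ite_eq, Finset.sum_ite_eq']
      refine Finset.sum_congr rfl fun x _ => ?_
      rw [← Complex.ofReal_pow, ← Complex.ofReal_pow, Complex.sq_norm, Complex.sq_norm,
        ← Complex.mul_conj, ← Complex.mul_conj]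
      ring
    · simp [h, show y' ≠ y from fun hh => h hh.symm, Finset.sum_ite_eq, Finset.sum_ite_eq']
  have hρ2diag : ρ2 = Matrix.diagonal (fun y => (q y : ℂ)) := hρ2B.trans hdiagB
  -- charpoly relation
  have hmul12 : (B.map Polynomial.C) * (Bᴴ.map Polynomial.C) = ρ12.map Polynomial.C := by
    rw [← Matrix.map_mul, hρ12B]
  have hmul2 : (Bᴴ.map Polynomial.C) * (B.map Polynomial.C) = ρ2.map Polynomial.C := by
    rw [← Matrix.map_mul, hρ2B]
  have hcard : (Polynomial.X : Polynomial ℂ) ^ d * ρ12.charpoly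
      = (Polynomial.X : Polynomial ℂ) ^ (d * d) * ρ2.charpoly := by
    have H := det_smul_one_sub_mul' (B.map Polynomial.C) (Bᴴ.map Polynomial.C)
    rw [hmul12, hmul2, ← charpoly_eq_det', ← charpoly_eq_det'] at H
    simpa using H
  -- multisets of eigenvalues
  set Λ : Multiset ℂ :=
    Finset.univ.val.map (fun i : Fin d × Fin d => ((h12.eigenvalues i : ℝ) : ℂ)) with hΛ
  set Qm : Multiset ℂ :=
    Finset.univ.val.map (fun j : Fin d => ((h2.eigenvalues j : ℝ) : ℂ)) with hQm
  set Qq : Multiset ℂ := Finset.univ.val.map (fun j : Fin d => ((q j : ℝ) : ℂ)) with hQq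
  have hch12 : ρ12.charpoly = (Λ.map (fun a => Polynomial.X - Polynomial.C a)).prod := by
    rw [hermitian_charpoly' h12, Finset.prod_eq_multiset_prod, hΛ, Multiset.map_map]
    rfl
  have hch2eig : ρ2.charpoly = (Qm.map (fun a => Polynomial.X - Polynomial.C a)).prod := by
    rw [hermitian_charpoly' h2, Finset.prod_eq_multiset_prod, hQm, Multiset.map_map]
    rfl
  have hch2q : ρ2.charpoly = (Qq.map (fun a => Polynomial.X - Polynomial.C a)).prod := by
    rw [hρ2diag, charpoly_diagonal', Finset.prod_eq_multiset_prod, hQq, Multiset.map_map]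
    rfl
  have hQmq : Qm = Qq := prodXsubC_inj' (by rw [← hch2eig, ← hch2q])
  have hbig : Multiset.replicate d (0 : ℂ) + Λ = Multiset.replicate (d * d) (0 : ℂ) + Qm := by
    apply prodXsubC_inj'
    rw [Multiset.map_add, Multiset.prod_add, Multiset.map_add, Multiset.prod_add,
      replicate_zero_prod', replicate_zero_prod', ← hch12, ← hch2eig]
    exact hcard
  have hdd : d ≤ d * d := by
    rcases Nat.eq_zero_or_pos d with h | h
    · simp [h]
    · exact Nat.le_mul_of_pos_left d h
  have hsplit : Multiset.replicate (d * d) (0 : ℂ)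
      = Multiset.replicate d (0 : ℂ) + Multiset.replicate (d * d - d) (0 : ℂ) := by
    rw [← Multiset.replicate_add, Nat.add_sub_cancel' hdd]
  have hΛeq : Λ = Multiset.replicate (d * d - d) (0 : ℂ) + Qm := by
    have h' := hbig
    rw [hsplit, add_assoc] at h'
    exact add_left_cancel h'
  -- sums
  set F : ℂ → ℝ := fun c => c.re * Real.log c.re with hF
  have hs12 : ∑ i, h12.eigenvalues i * Real.log (h12.eigenvalues i) = (Λ.map F).sum := by
    rw [hΛ, Multiset.map_map, ← Finset.sum_eq_multiset_sum]
    exact Finset.sum_congr rfl fun i _ => by simp [hF]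
  have hs2 : ∑ j, h2.eigenvalues j * Real.log (h2.eigenvalues j) = (Qm.map F).sum := by
    rw [hQm, Multiset.map_map, ← Finset.sum_eq_multiset_sum]
    exact Finset.sum_congr rfl fun j _ => by simp [hF]
  have hsq : (Qq.map F).sum = ∑ j, q j * Real.log (q j) := by
    rw [hQq, Multiset.map_map, ← Finset.sum_eq_multiset_sum]
    exact Finset.sum_congr rfl fun j _ => by simp [hF]
  have hsum0 : ((Multiset.replicate (d * d - d) (0 : ℂ)).map F).sum = 0 := by
    simp [hF]
  have key12 : ∑ i, h12.eigenvalues i * Real.log (h12.eigenvalues i)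
      = ∑ j, q j * Real.log (q j) := by
    rw [hs12, hΛeq, Multiset.map_add, Multiset.sum_add, hsum0, zero_add, hQmq, hsq]
  have key2 : ∑ j, h2.eigenvalues j * Real.log (h2.eigenvalues j)
      = ∑ j, q j * Real.log (q j) := by
    rw [hs2, hQmq, hsq]
  constructor
  · simp only [vnEntropy]
    rw [key12, key2]
  · simp only [vnEntropy, shannonH]
    rw [key2]
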